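/- Let f : ℝ → ℝ be bounded and regulated, and satisfy the no-jamming condition. Let x : [0,τ] → ℝ be a strictly increasing Carathéodory solution of ẋ = f(x), x(0) = x₀. Then there exists a positive, atomless Borel measure μ on ℝ, supported on the set f⁻¹(0), such that ∫_{x₀}^{x(t)} 1/f(s) ds + μ([x₀, x(t)]) = t for all t ∈ [0,τ]. -/

import Mathlib

open MeasureTheory Set Filter Metric Topology


lemma lip_null_image {K : NNReal} {F : ℝ → ℝ} (hF : LipschitzWith K F) {s : Set ℝ}
    (hs : volume s = 0) : volume (F '' s) = 0 := by
  have h := hF.hausdorffMeasure_image_le (by norm_num : (0:ℝ) ≤ 1) s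
  rw [MeasureTheory.hausdorffMeasure_real] at h
  refine le_antisymm (le_trans h ?_) zero_le
  rw [hs]
  simp

lemma ae_hasDerivAt_primitive (G : ℝ → ℝ) (hG : Integrable G volume) :
    ∀ᵐ u ∂(volume : Measure ℝ), HasDerivAt (fun t => ∫ s in (0:ℝ)..t, G s) (G u) u := by
  filter_upwards [IsUnifLocDoublingMeasure.ae_tendsto_average_norm_sub (μ := (volume : Measure ℝ))
    hG.locallyIntegrable 1] with u hu
  set F : ℝ → ℝ := fun t => ∫ s in (0:ℝ)..t, G s with hF
  have havg : Tendsto (fun v : ℝ => ⨍ y in closedBall u |v - u|, ‖G y - G u‖)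
      (𝓝[≠] u) (𝓝 0) := by
    apply hu (fun _ => u) (fun v => |v - u|)
    · rw [tendsto_nhdsWithin_iff]
      constructor
      · have : Tendsto (fun v : ℝ => |v - u|) (𝓝 u) (𝓝 |u - u|) := by
          exact (continuous_abs.comp (continuous_id.sub continuous_const)).tendsto u
        simpa using this.mono_left nhdsWithin_le_nhds
      · filter_upwards [self_mem_nhdsWithin] with v hv
        exact abs_pos.2 (sub_ne_zero.2 hv)
    · filter_upwards with v
      simp [mem_closedBall, dist_self]
  rw [hasDerivAt_iff_tendsto]
  have h0 : (fun v : ℝ => ‖v - u‖⁻¹ * ‖F v - F u - (v - u) • G u‖) u = 0 := by simp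
  rw [← nhdsNE_sup_pure u]
  have hp : Tendsto (fun v : ℝ => ‖v - u‖⁻¹ * ‖F v - F u - (v - u) • G u‖) (pure u) (𝓝 0) := by
    simpa [h0] using tendsto_pure_nhds (fun v : ℝ => ‖v - u‖⁻¹ * ‖F v - F u - (v - u) • G u‖) u
  refine Tendsto.sup ?_ hp
  apply squeeze_zero' (g := fun v => 2 * ⨍ y in closedBall u |v - u|, ‖G y - G u‖)
  · filter_upwards with v; positivity
  · filter_upwards [self_mem_nhdsWithin] with v hv
    have hr : 0 < |v - u| := abs_pos.2 (sub_ne_zero.2 hv)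
    have hkey : F v - F u - (v - u) • G u = ∫ y in u..v, (G y - G u) := by
      have h1 : (∫ s in (0:ℝ)..v, G s) - ∫ s in (0:ℝ)..u, G s = ∫ y in u..v, G y :=
        intervalIntegral.integral_interval_sub_left hG.intervalIntegrable hG.intervalIntegrable
      rw [intervalIntegral.integral_sub hG.intervalIntegrable intervalIntegrable_const,
        intervalIntegral.integral_const]
      simp only [hF]
      rw [← h1]
    have hbound : ‖F v - F u - (v - u) • G u‖ ≤
        ∫ y in closedBall u |v - u|, ‖G y - G u‖ := by
      rw [hkey, intervalIntegral.norm_intervalIntegral_eq]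
      refine le_trans (norm_integral_le_integral_norm _) ?_
      apply setIntegral_mono_set
      · exact (hG.integrableOn.sub ((integrableOn_const_iff).2 (Or.inr (by
          rw [Real.volume_closedBall]; exact ENNReal.ofReal_lt_top)))).norm
      · filter_upwards with y using norm_nonneg _
      · apply HasSubset.Subset.eventuallyLE
        intro y hy
        rw [mem_closedBall, Real.dist_eq]
        rcases le_total u v with h | h
        · rw [uIoc_of_le h] at hy
          rw [abs_of_nonneg (le_of_lt (sub_pos.2 hy.1)), abs_of_nonneg (sub_nonneg.2 h)]
          linarith [hy.2]
        · rw [uIoc_of_ge h] at hy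
          rw [abs_of_nonpos (by linarith [hy.2] : y - u ≤ 0), abs_of_nonpos (sub_nonpos.2 h)]
          linarith [hy.1]
    have havg_eq : (⨍ y in closedBall u |v - u|, ‖G y - G u‖) =
        (2 * |v - u|)⁻¹ * ∫ y in closedBall u |v - u|, ‖G y - G u‖ := by
      rw [setAverage_eq, measureReal_def, Real.volume_closedBall, ENNReal.toReal_ofReal (by positivity)]
      simp [smul_eq_mul]
    rw [Real.norm_eq_abs, havg_eq]
    have h2 : 2 * ((2 * |v - u|)⁻¹ * ∫ y in closedBall u |v - u|, ‖G y - G u‖)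
        = |v - u|⁻¹ * ∫ y in closedBall u |v - u|, ‖G y - G u‖ := by
      field_simp
    rw [h2]
    exact mul_le_mul_of_nonneg_left hbound (by positivity)
  · simpa using havg.const_mul 2

/-- `f` is regulated with left limits `fl` and right limits `fr`. -/
def Regulated (f fl fr : ℝ → ℝ) : Prop :=
  ∀ y : ℝ,
    Filter.Tendsto f (nhdsWithin y (Set.Iio y)) (nhds (fl y)) ∧
    Filter.Tendsto f (nhdsWithin y (Set.Ioi y)) (nhds (fr y))

/-- The no-jamming condition: if `f(y−)·f(y+) = 0` or `f(y−) > 0 > f(y+)`, then `f(y) = 0`. -/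
def NoJamming (f fl fr : ℝ → ℝ) : Prop :=
  ∀ y : ℝ, (fl y * fr y = 0 ∨ (0 < fl y ∧ fr y < 0)) → f y = 0

/-- Lemma 3.1 (necessity): a strictly increasing Carathéodory solution of
`ẋ = f(x)`, `x(0) = x₀` determines an atomless measure `μ` supported on
`f⁻¹(0)` such that `∫_{x₀}^{x(t)} 1/f + μ([x₀, x(t)]) = t` on `[0,τ]`.
(Here `(f y)⁻¹ = 0` where `f y = 0`, so the integral is over `{f ≠ 0}`.) -/
theorem strictly_increasing_solution_yields_measure
    (f : ℝ → ℝ) (M : ℝ) (hb : ∀ y : ℝ, |f y| ≤ M)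
    (fl fr : ℝ → ℝ) (hreg : Regulated f fl fr) (hnj : NoJamming f fl fr)
    (τ : ℝ) (hτ : 0 ≤ τ) (x₀ : ℝ) (x : ℝ → ℝ)
    (hmono : StrictMonoOn x (Set.Icc 0 τ))
    (hsol : ∀ t ∈ Set.Icc (0:ℝ) τ, x t = x₀ + ∫ s in (0:ℝ)..t, f (x s)) :
    ∃ μ : Measure ℝ,
      (∀ y : ℝ, μ {y} = 0) ∧
      (∀ A : Set ℝ, MeasurableSet A → (∀ a ∈ A, f a ≠ 0) → μ A = 0) ∧
      (∀ t ∈ Set.Icc (0:ℝ) τ,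
        μ (Set.Icc x₀ (x t)) < ⊤ ∧
        (∫ y in x₀..(x t), (f y)⁻¹) + (μ (Set.Icc x₀ (x t))).toReal = t) := by
  have hx0 : x 0 = x₀ := by simpa using hsol 0 ⟨le_rfl, hτ⟩
  rcases eq_or_lt_of_le hτ with hτ0 | hτ0
  · refine ⟨0, fun y => by simp, fun A _ _ => by simp, ?_⟩
    intro t ht
    rw [← hτ0] at ht
    have ht0 : t = 0 := le_antisymm ht.2 ht.1
    subst ht0
    rw [hx0]
    simp [intervalIntegral.integral_same]
  -- main case τ > 0
  have hM0 : 0 ≤ M := le_trans (abs_nonneg _) (hb 0)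
  have hint : IntervalIntegrable (fun s => f (x s)) volume 0 τ := by
    by_contra h
    have h1 := hsol τ ⟨hτ, le_rfl⟩
    rw [intervalIntegral.integral_undef h] at h1
    have hlt := hmono ⟨le_rfl, hτ⟩ ⟨hτ, le_rfl⟩ hτ0
    rw [h1, hx0] at hlt
    linarith
  have hioc : IntegrableOn (fun s => f (x s)) (Ioc 0 τ) volume :=
    (intervalIntegrable_iff_integrableOn_Ioc_of_le hτ).1 hint
  set G : ℝ → ℝ := (Ioc 0 τ).indicator (fun s => f (x s)) with hGdef
  have hG : Integrable G volume := by
    rw [hGdef, integrable_indicator_iff measurableSet_Ioc]; exact hioc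
  set Fg : ℝ → ℝ := fun t => x₀ + ∫ s in (0:ℝ)..t, G s with hFgdef
  have hxF : ∀ t ∈ Icc (0:ℝ) τ, x t = Fg t := by
    intro t ht
    rw [hsol t ht, hFgdef]
    simp only [add_right_inj]
    rw [intervalIntegral.integral_of_le ht.1, intervalIntegral.integral_of_le ht.1]
    apply setIntegral_congr_fun measurableSet_Ioc
    intro s hs
    have hmem : s ∈ Ioc 0 τ := ⟨hs.1, hs.2.trans ht.2⟩
    simp [hGdef, Set.indicator_of_mem hmem]
  have hFgcont : Continuous Fg := continuous_const.add
    (intervalIntegral.continuous_primitive (fun a b => hG.intervalIntegrable) 0)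
  have hxcont : ContinuousOn x (Icc 0 τ) := hFgcont.continuousOn.congr hxF
  have hGb : ∀ s, ‖G s‖ ≤ M := by
    intro s
    rw [hGdef, Real.norm_eq_abs]
    by_cases h : s ∈ Ioc 0 τ
    · rw [indicator_of_mem h]; exact hb _
    · rw [indicator_of_notMem h]; simpa using hM0
  have hFgLip : LipschitzWith (Real.toNNReal M) Fg := by
    apply LipschitzWith.of_dist_le_mul
    intro a b
    rw [Real.dist_eq, Real.dist_eq, hFgdef]
    simp only [add_sub_add_left_eq_sub]
    have h1 : (∫ s in (0:ℝ)..a, G s) - ∫ s in (0:ℝ)..b, G s = ∫ s in b..a, G s :=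
      intervalIntegral.integral_interval_sub_left hG.intervalIntegrable hG.intervalIntegrable
    rw [h1]
    have h2 : ‖∫ s in b..a, G s‖ ≤ M * |a - b| :=
      intervalIntegral.norm_integral_le_of_norm_le_const (fun s _ => hGb s)
    rw [Real.coe_toNNReal M hM0]
    calc |∫ s in b..a, G s| ≤ M * |a - b| := by simpa [Real.norm_eq_abs] using h2
    _ = M * |a - b| := rfl
  have hae : ∀ᵐ u ∂(volume : Measure ℝ), HasDerivAt Fg (G u) u := by
    filter_upwards [ae_hasDerivAt_primitive G hG] with u hu
    exact hu.const_add x₀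
  -- clamped version of x
  set xt : ℝ → ℝ := fun u => x (max 0 (min u τ)) with hxtdef
  have hclamp : ∀ u : ℝ, max 0 (min u τ) ∈ Icc (0:ℝ) τ :=
    fun u => ⟨le_max_left _ _, max_le hτ (min_le_right _ _)⟩
  have hxtmono : Monotone xt := by
    intro a b hab
    exact hmono.monotoneOn (hclamp a) (hclamp b)
      (max_le_max le_rfl (min_le_min_right _ hab))
  have hxtm : Measurable xt := hxtmono.measurable
  have hxteq : ∀ u ∈ Icc (0:ℝ) τ, xt u = x u := by
    intro u hu
    rw [hxtdef]
    simp only []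
    rw [min_eq_left hu.2, max_eq_right hu.1]
  have hfxt : AEStronglyMeasurable (fun u => f (xt u)) (volume.restrict (Ioc 0 τ)) := by
    apply hioc.aestronglyMeasurable.congr
    filter_upwards [ae_restrict_mem measurableSet_Ioc] with u hu
    rw [hxteq u (Ioc_subset_Icc_self hu)]
  set g : ℝ → ℝ := hfxt.mk _ with hgdef
  have hgm : StronglyMeasurable g := hfxt.stronglyMeasurable_mk
  have hgmeas : Measurable g := hgm.measurable
  have hfg : ∀ᵐ u ∂(volume : Measure ℝ), u ∈ Ioc (0:ℝ) τ → f (x u) = g u := by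
    have := (ae_restrict_iff' measurableSet_Ioc).1 hfxt.ae_eq_mk
    filter_upwards [this] with u hu hmem
    rw [← hxteq u (Ioc_subset_Icc_self hmem)]
    exact hu hmem
  set E : Set ℝ := Ioc 0 τ ∩ {u | g u = 0} with hEdef
  have hgzm : MeasurableSet {u | g u = 0} := hgmeas (measurableSet_singleton 0)
  have hEm : MeasurableSet E := measurableSet_Ioc.inter hgzm
  refine ⟨Measure.map xt (volume.restrict E), ?_, ?_, ?_⟩
  · -- atomless
    intro y
    rw [Measure.map_apply hxtm (measurableSet_singleton y),
      Measure.restrict_apply (hxtm (measurableSet_singleton y))]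
    have hsub : Set.Subsingleton (xt ⁻¹' {y} ∩ E) := by
      intro a ha b hb
      have ha' : x a = y := by
        rw [← hxteq a (Ioc_subset_Icc_self ha.2.1)]; exact ha.1
      have hb' : x b = y := by
        rw [← hxteq b (Ioc_subset_Icc_self hb.2.1)]; exact hb.1
      exact hmono.injOn (Ioc_subset_Icc_self ha.2.1) (Ioc_subset_Icc_self hb.2.1)
        (ha'.trans hb'.symm)
    exact hsub.measure_zero _
  · -- support
    intro A hA hAf
    rw [Measure.map_apply hxtm hA, Measure.restrict_apply (hxtm hA)]
    rw [ae_iff] at hfg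
    apply measure_mono_null ?_ hfg
    intro u hu
    simp only [mem_setOf_eq, not_forall]
    refine ⟨hu.2.1, fun heq => ?_⟩
    have hfu : f (x u) = 0 := heq.trans hu.2.2
    have hxA : x u ∈ A := by
      rw [← hxteq u (Ioc_subset_Icc_self hu.2.1)]
      exact hu.1
    exact hAf _ hxA hfu
  · -- main identity
    intro t ht
    have htI : t ∈ Icc (0:ℝ) τ := ht
    set B : Set ℝ := Ioc 0 t ∩ {u | g u = 0} with hBdef
    have hBm : MeasurableSet B := measurableSet_Ioc.inter hgzm
    have hμIcc : Measure.map xt (volume.restrict E) (Icc x₀ (x t)) = volume B := by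
      rw [Measure.map_apply hxtm measurableSet_Icc,
        Measure.restrict_apply (hxtm measurableSet_Icc)]
      congr 1
      ext u
      constructor
      · rintro ⟨hu1, hu2⟩
        have huIoc : u ∈ Ioc (0:ℝ) τ := hu2.1
        have huIcc : u ∈ Icc (0:ℝ) τ := Ioc_subset_Icc_self huIoc
        rw [mem_preimage, hxteq u huIcc] at hu1
        have hut : u ≤ t := by
          by_contra hlt
          push_neg at hlt
          have := hmono htI huIcc hlt
          have h2 := hu1.2
          linarith
        exact ⟨⟨huIoc.1, hut⟩, hu2.2⟩
      · rintro ⟨hu1, hu2⟩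
        have huIcc : u ∈ Icc (0:ℝ) τ := ⟨le_of_lt hu1.1, le_trans hu1.2 htI.2⟩
        refine ⟨?_, ⟨⟨hu1.1, le_trans hu1.2 htI.2⟩, hu2⟩⟩
        rw [mem_preimage, hxteq u huIcc]
        exact ⟨hx0 ▸ hmono.monotoneOn ⟨le_rfl, hτ⟩ huIcc huIcc.1,
          hmono.monotoneOn huIcc htI hu1.2⟩
    have hBfin : volume B < ⊤ :=
      lt_of_le_of_lt (measure_mono inter_subset_left)
        (by rw [Real.volume_Ioc]; exact ENNReal.ofReal_lt_top)
    refine ⟨hμIcc ▸ hBfin, ?_⟩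
    -- exceptional set
    obtain ⟨N, hNm, hNnull, hNsub⟩ : ∃ N : Set ℝ, MeasurableSet N ∧ volume N = 0 ∧
        {u : ℝ | ¬ HasDerivAt Fg (G u) u} ⊆ N := by
      rw [ae_iff] at hae
      exact ⟨toMeasurable volume _, measurableSet_toMeasurable _ _,
        by rwa [measure_toMeasurable], subset_toMeasurable _ _⟩
    set s : Set ℝ := Ioo 0 t \ N with hsdef
    have hsm : MeasurableSet s := measurableSet_Ioo.diff hNm
    have hssub : s ⊆ Icc (0:ℝ) τ :=
      fun u hu => ⟨le_of_lt hu.1.1, le_trans (le_of_lt hu.1.2) htI.2⟩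
    have hsIoc : s ⊆ Ioc (0:ℝ) τ :=
      fun u hu => ⟨hu.1.1, le_trans (le_of_lt hu.1.2) htI.2⟩
    have hder : ∀ u ∈ s, HasDerivAt Fg (G u) u := by
      intro u hu
      by_contra h
      exact hu.2 (hNsub h)
    have hGu : ∀ u ∈ s, G u = f (x u) := by
      intro u hu
      rw [hGdef, indicator_of_mem (hsIoc hu)]
    have hxder : ∀ u ∈ s, HasDerivWithinAt x (f (x u)) s u := by
      intro u hu
      have h1 := (hder u hu).hasDerivWithinAt (s := s)
      rw [hGu u hu] at h1
      exact h1.congr (fun v hv => hxF v (hssub hv)) (hxF u (hssub hu))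
    have hfpos : ∀ u ∈ s, 0 ≤ f (x u) := by
      intro u hu
      have hder' := hder u hu
      rw [hGu u hu] at hder'
      have hslope := hasDerivAt_iff_tendsto_slope.1 hder'
      have hslope' : Tendsto (slope Fg u) (𝓝[>] u) (𝓝 (f (x u))) :=
        hslope.mono_left (nhdsWithin_mono u (fun v hv => ne_of_gt hv))
      apply ge_of_tendsto hslope'
      filter_upwards [Ioo_mem_nhdsGT_of_mem ⟨le_rfl, hu.1.2⟩] with v hv
      rw [slope_def_field]
      have hvIcc : v ∈ Icc (0:ℝ) τ :=
        ⟨le_of_lt (lt_trans hu.1.1 hv.1), le_trans (le_of_lt hv.2) htI.2⟩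
      have hmle : Fg u ≤ Fg v := by
        rw [← hxF u (hssub hu), ← hxF v hvIcc]
        exact hmono.monotoneOn (hssub hu) hvIcc (le_of_lt hv.1)
      apply div_nonneg (by linarith) (by linarith [hv.1])
    have hinj : InjOn x s := hmono.injOn.mono hssub
    have hCoV := integral_image_eq_integral_abs_deriv_smul hsm hxder hinj (fun y => (f y)⁻¹)
    have hx0t : x₀ ≤ x t := hx0 ▸ hmono.monotoneOn ⟨le_rfl, hτ⟩ htI htI.1
    have himsub : x '' s ⊆ Ioc x₀ (x t) := by
      rintro _ ⟨u, hu, rfl⟩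
      have hu' : u ∈ Icc (0:ℝ) τ := hssub hu
      exact ⟨hx0 ▸ hmono ⟨le_rfl, hτ⟩ hu' hu.1.1, le_of_lt (hmono hu' htI hu.1.2)⟩
    have himnull : volume (Ioc x₀ (x t) \ x '' s) = 0 := by
      have hIVT : Ioo (x 0) (x t) ⊆ x '' Ioo 0 t :=
        intermediate_value_Ioo htI.1 (hxcont.mono (Icc_subset_Icc le_rfl htI.2))
      have hsub2 : Ioc x₀ (x t) \ x '' s ⊆ {x t} ∪ x '' (Ioo 0 t ∩ N) := by
        rintro y ⟨hy1, hy2⟩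
        rcases eq_or_lt_of_le hy1.2 with h | h
        · exact Or.inl (by simp [h])
        · right
          obtain ⟨u, hu, rfl⟩ := hIVT ⟨hx0 ▸ hy1.1, h⟩
          refine ⟨u, ⟨hu, ?_⟩, rfl⟩
          by_contra hN
          exact hy2 ⟨u, ⟨hu, hN⟩, rfl⟩
      apply measure_mono_null hsub2
      apply measure_union_null (measure_singleton _)
      have himeq : x '' (Ioo 0 t ∩ N) = Fg '' (Ioo 0 t ∩ N) :=
        image_congr fun u hu => hxF u ⟨le_of_lt hu.1.1, le_trans (le_of_lt hu.1.2) htI.2⟩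
      rw [himeq]
      exact lip_null_image hFgLip (measure_mono_null inter_subset_right hNnull)
    have hint1 : (∫ y in x₀..(x t), (f y)⁻¹) = ∫ y in x '' s, (f y)⁻¹ := by
      rw [intervalIntegral.integral_of_le hx0t]
      apply setIntegral_congr_set
      rw [MeasureTheory.ae_eq_set]
      refine ⟨himnull, ?_⟩
      rw [diff_eq_empty.2 himsub]
      exact measure_empty
    have hint2 : (∫ u in s, |f (x u)| • (f (x u))⁻¹) =
        (volume (s ∩ {u | g u ≠ 0})).toReal := by
      have step1 : (∫ u in s, |f (x u)| • (f (x u))⁻¹) =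
          ∫ u in s, ({u : ℝ | g u ≠ 0}).indicator (fun _ => (1:ℝ)) u := by
        apply setIntegral_congr_ae hsm
        filter_upwards [hfg] with u hu hus
        have hgu : f (x u) = g u := hu (hsIoc hus)
        by_cases hz : f (x u) = 0
        · rw [hz]
          have : g u = 0 := by rw [← hgu]; exact hz
          simp [indicator, this]
        · have hpos : 0 < f (x u) := lt_of_le_of_ne (hfpos u hus) (Ne.symm hz)
          have : g u ≠ 0 := by rw [← hgu]; exact hz
          rw [abs_of_pos hpos, smul_eq_mul, mul_inv_cancel₀ hz]
          simp [indicator, this]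
      have hcompl : {u : ℝ | g u ≠ 0} = {u : ℝ | g u = 0}ᶜ := rfl
      rw [step1, hcompl, setIntegral_indicator hgzm.compl, setIntegral_const]
      rw [← hcompl]
      simp
      rfl
    have hABvol : volume (s ∩ {u | g u ≠ 0}) + volume B = ENNReal.ofReal t := by
      have hAm : MeasurableSet (s ∩ {u | g u ≠ 0}) := hsm.inter hgzm.compl
      have hd : Disjoint (s ∩ {u | g u ≠ 0}) B := by
        apply Set.disjoint_left.2
        rintro u ⟨_, hu2⟩ ⟨_, hu4⟩
        exact hu2 hu4
      rw [← measure_union hd hBm]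
      apply le_antisymm
      · have hsub3 : (s ∩ {u | g u ≠ 0}) ∪ B ⊆ Ioc 0 t := by
          rintro u (hu | hu)
          · exact ⟨hu.1.1.1, le_of_lt hu.1.1.2⟩
          · exact hu.1
        calc volume ((s ∩ {u | g u ≠ 0}) ∪ B) ≤ volume (Ioc 0 t) := measure_mono hsub3
        _ = ENNReal.ofReal t := by rw [Real.volume_Ioc, sub_zero]
      · have hsub4 : Ioo 0 t \ N ⊆ (s ∩ {u | g u ≠ 0}) ∪ B := by
          intro u hu
          by_cases hz : g u = 0
          · exact Or.inr ⟨⟨hu.1.1, le_of_lt hu.1.2⟩, hz⟩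
          · exact Or.inl ⟨hu, hz⟩
        calc ENNReal.ofReal t = volume (Ioo 0 t) := by rw [Real.volume_Ioo, sub_zero]
        _ = volume (Ioo 0 t \ N) := (measure_diff_null hNnull).symm
        _ ≤ volume ((s ∩ {u | g u ≠ 0}) ∪ B) := measure_mono hsub4
    have hAfin : volume (s ∩ {u | g u ≠ 0}) < ⊤ := by
      have hle : volume (s ∩ {u | g u ≠ 0}) ≤ ENNReal.ofReal t := by
        rw [← hABvol]; exact le_self_add
      exact lt_of_le_of_lt hle ENNReal.ofReal_lt_top
    have htoReal : (volume (s ∩ {u | g u ≠ 0})).toReal + (volume B).toReal = t := by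
      have h5 := congrArg ENNReal.toReal hABvol
      rw [ENNReal.toReal_add hAfin.ne hBfin.ne, ENNReal.toReal_ofReal htI.1] at h5
      exact h5
    rw [hμIcc, hint1, hCoV, hint2]
    exact htoReal
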